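/- arXiv:0908.3211 — 2 statements merged into one kernel-verified Lean document; each statement's English description precedes it below -/
import Mathlib

section
/- For every x > 0, the absolute value of the Fresnel-type tail integral ∫_x^∞ e^{iu²} du is bounded by C/(1+x) for some absolute constant C. -/
open MeasureTheory Complex Filter

private lemma fresnel_norm_exp (t : ℝ) : ‖Complex.exp (Complex.I * (t : ℂ) ^ 2)‖ = 1 := by
  rw [Complex.norm_exp]
  have : (Complex.I * (t : ℂ) ^ 2).re = 0 := by
    simp [Complex.mul_re, ← Complex.ofReal_pow]
  rw [this, Real.exp_zero]

private lemma fresnel_ibp (x : ℝ) (hx : 0 < x) (R : ℝ) (hR : x ≤ R) :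
    ∫ u in x..R, Complex.exp (Complex.I * u ^ 2) =
      (Complex.exp (Complex.I * R ^ 2) / (2 * Complex.I * R)
        - Complex.exp (Complex.I * x ^ 2) / (2 * Complex.I * x))
      + ∫ u in x..R, Complex.exp (Complex.I * u ^ 2) / (2 * Complex.I * u ^ 2) := by
  have hne : ∀ t ∈ Set.uIcc x R, (t : ℝ) ≠ 0 := by
    intro t ht
    rw [Set.uIcc_of_le hR] at ht
    exact (lt_of_lt_of_le hx ht.1).ne'
  have hu : ∀ t ∈ Set.uIcc x R,
      HasDerivAt (fun t : ℝ => (2 * Complex.I * t)⁻¹)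
        (-(2 * Complex.I) / (2 * Complex.I * t) ^ 2) t := by
    intro t ht
    have h0 : 2 * Complex.I * (t : ℂ) ≠ 0 := by
      simp [Complex.I_ne_zero, Complex.ofReal_ne_zero, hne t ht]
    have h1 : HasDerivAt (fun z : ℂ => (2 * Complex.I * z)⁻¹)
        (-(2 * Complex.I) / (2 * Complex.I * t) ^ 2) (t : ℂ) := by
      have := ((hasDerivAt_id (t : ℂ)).const_mul (2 * Complex.I)).inv h0
      rw [mul_one] at this
      exact this
    exact h1.comp_ofReal
  have hv : ∀ t ∈ Set.uIcc x R,
      HasDerivAt (fun t : ℝ => Complex.exp (Complex.I * t ^ 2))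
        (2 * Complex.I * t * Complex.exp (Complex.I * t ^ 2)) t := by
    intro t _
    have h1 : HasDerivAt (fun z : ℂ => Complex.exp (Complex.I * z ^ 2))
        (2 * Complex.I * t * Complex.exp (Complex.I * t ^ 2)) (t : ℂ) := by
      have := (((hasDerivAt_pow 2 (t : ℂ)).const_mul Complex.I)).cexp
      refine this.congr_deriv ?_
      simp only [Nat.cast_ofNat, show (2 : ℕ) - 1 = 1 from rfl, pow_one]
      ring
    exact h1.comp_ofReal
  have hu'int : IntervalIntegrable
      (fun t : ℝ => -(2 * Complex.I) / (2 * Complex.I * t) ^ 2) volume x R := by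
    apply ContinuousOn.intervalIntegrable
    apply ContinuousOn.div continuousOn_const
    · fun_prop
    · intro t ht
      have h0 : 2 * Complex.I * (t : ℂ) ≠ 0 := by
        simp [Complex.I_ne_zero, Complex.ofReal_ne_zero, hne t ht]
      exact pow_ne_zero 2 h0
  have hv'int : IntervalIntegrable
      (fun t : ℝ => 2 * Complex.I * t * Complex.exp (Complex.I * t ^ 2)) volume x R := by
    apply Continuous.intervalIntegrable
    fun_prop
  have ibp := intervalIntegral.integral_mul_deriv_eq_deriv_mul hu hv hu'int hv'int
  have e1 : ∫ u in x..R, Complex.exp (Complex.I * u ^ 2)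
      = ∫ t in x..R, (2 * Complex.I * t)⁻¹
          * (2 * Complex.I * t * Complex.exp (Complex.I * t ^ 2)) := by
    apply intervalIntegral.integral_congr
    intro t ht
    have h0 : 2 * Complex.I * (t : ℂ) ≠ 0 := by
      simp [Complex.I_ne_zero, Complex.ofReal_ne_zero, hne t ht]
    have ht0 : (t : ℂ) ≠ 0 := by simpa using hne t ht
    field_simp
  have e2 : ∫ t in x..R, (-(2 * Complex.I) / (2 * Complex.I * t) ^ 2)
        * Complex.exp (Complex.I * t ^ 2)
      = -∫ t in x..R, Complex.exp (Complex.I * t ^ 2) / (2 * Complex.I * t ^ 2) := by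
    rw [← intervalIntegral.integral_neg]
    apply intervalIntegral.integral_congr
    intro t ht
    have h0 : (t : ℂ) ≠ 0 := by
      simpa using hne t ht
    have hI : Complex.I ≠ 0 := Complex.I_ne_zero
    field_simp
  rw [e1, ibp, e2]
  have h0x : 2 * Complex.I * (x : ℂ) ≠ 0 := by
    simp [Complex.I_ne_zero, Complex.ofReal_ne_zero, hx.ne']
  have h0R : 2 * Complex.I * (R : ℂ) ≠ 0 := by
    simp [Complex.I_ne_zero, Complex.ofReal_ne_zero, (lt_of_lt_of_le hx hR).ne']
  field_simp
  ring

private lemma fresnel_norm_g (t : ℝ) (ht : 0 < t) :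
    ‖Complex.exp (Complex.I * (t : ℂ) ^ 2) / (2 * Complex.I * (t : ℂ) ^ 2)‖
      = (1 / 2) * t ^ (-2 : ℝ) := by
  rw [norm_div, fresnel_norm_exp]
  have h1 : ‖(2 : ℂ) * Complex.I * (t : ℂ) ^ 2‖ = 2 * t ^ 2 := by
    simp [norm_mul, Complex.norm_I, abs_of_pos ht, sq_abs]
  rw [h1, Real.rpow_neg ht.le]
  rw [show ((2 : ℝ) : ℝ) = ((2 : ℕ) : ℝ) by norm_num, Real.rpow_natCast]
  field_simp

private lemma fresnel_g_integrable (x : ℝ) (hx : 0 < x) :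
    IntegrableOn (fun t : ℝ => Complex.exp (Complex.I * (t : ℂ) ^ 2)
      / (2 * Complex.I * (t : ℂ) ^ 2)) (Set.Ioi x) := by
  have hmaj : IntegrableOn (fun t : ℝ => (1 / 2) * t ^ (-2 : ℝ)) (Set.Ioi x) :=
    (integrableOn_Ioi_rpow_of_lt (by norm_num) hx).const_mul _
  apply Integrable.mono' hmaj
  · apply ContinuousOn.aestronglyMeasurable _ measurableSet_Ioi
    apply ContinuousOn.div (by fun_prop)
    · fun_prop
    · intro t ht
      have h0 : (t : ℂ) ≠ 0 := by
        simpa using (lt_trans hx ht).ne'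
      simp [Complex.I_ne_zero, h0]
  · filter_upwards [ae_restrict_mem measurableSet_Ioi] with t ht
    rw [fresnel_norm_g t (lt_trans hx ht)]

private lemma fresnel_key (x : ℝ) (hx : 0 < x) :
    ∃ L : ℂ,
      Tendsto (fun R : ℝ => ∫ u in x..R, Complex.exp (Complex.I * u ^ 2))
        atTop (nhds L) ∧ ‖L‖ ≤ 1 / x := by
  set c : ℂ := Complex.exp (Complex.I * (x : ℂ) ^ 2) / (2 * Complex.I * x) with hc
  set T : ℂ := ∫ t in Set.Ioi x, Complex.exp (Complex.I * (t : ℂ) ^ 2)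
      / (2 * Complex.I * (t : ℂ) ^ 2) with hT
  refine ⟨-c + T, ?_, ?_⟩
  · have h1 : Tendsto (fun R : ℝ => Complex.exp (Complex.I * (R : ℂ) ^ 2) / (2 * Complex.I * R))
        atTop (nhds 0) := by
      have hbnd : ∀ᶠ R : ℝ in atTop,
          ‖Complex.exp (Complex.I * (R : ℂ) ^ 2) / (2 * Complex.I * R)‖ ≤ 1 / (2 * R) := by
        filter_upwards [eventually_gt_atTop 0] with R hR
        rw [norm_div, fresnel_norm_exp]
        have : ‖(2 : ℂ) * Complex.I * (R : ℂ)‖ = 2 * R := by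
          simp [norm_mul, Complex.norm_I, abs_of_pos hR]
        rw [this]
      have hg : Tendsto (fun R : ℝ => 1 / (2 * R)) atTop (nhds 0) := by
        have : Tendsto (fun R : ℝ => 2 * R) atTop atTop :=
          (tendsto_id.const_mul_atTop (by norm_num))
        have h := this.inv_tendsto_atTop
        simp only [one_div]
        convert h using 1
        rfl
      exact squeeze_zero_norm' hbnd hg
    have h2 : Tendsto (fun R : ℝ =>
        ∫ u in x..R, Complex.exp (Complex.I * u ^ 2) / (2 * Complex.I * u ^ 2))
        atTop (nhds T) :=
      intervalIntegral_tendsto_integral_Ioi x (fresnel_g_integrable x hx) tendsto_id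
    have h3 := ((h1.sub_const c).add h2)
    rw [zero_sub] at h3
    apply h3.congr'
    filter_upwards [eventually_ge_atTop x] with R hR
    rw [fresnel_ibp x hx R hR]
  · have hnc : ‖c‖ = 1 / (2 * x) := by
      rw [hc, norm_div, fresnel_norm_exp]
      have : ‖(2 : ℂ) * Complex.I * (x : ℂ)‖ = 2 * x := by
        simp [norm_mul, Complex.norm_I, abs_of_pos hx]
      rw [this]
    have hnT : ‖T‖ ≤ 1 / (2 * x) := by
      have hb := norm_integral_le_of_norm_le
        ((integrableOn_Ioi_rpow_of_lt (show (-2 : ℝ) < -1 by norm_num) hx).const_mul (1 / 2 : ℝ))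
        (by filter_upwards [ae_restrict_mem measurableSet_Ioi] with t ht
            rw [fresnel_norm_g t (lt_trans hx ht)])
      refine hb.trans ?_
      rw [integral_const_mul,
        integral_Ioi_rpow_of_lt (show (-2 : ℝ) < -1 by norm_num) hx]
      rw [show (-2 : ℝ) + 1 = -1 by norm_num, Real.rpow_neg_one]
      rw [div_neg, div_one, neg_neg]
      rw [show (1 : ℝ) / (2 * x) = 2⁻¹ * x⁻¹ by rw [one_div, mul_inv]]
      norm_num
    calc ‖-c + T‖ ≤ ‖-c‖ + ‖T‖ := norm_add_le _ _
      _ = ‖c‖ + ‖T‖ := by rw [norm_neg]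
      _ ≤ 1 / (2 * x) + 1 / (2 * x) := by rw [hnc]; exact add_le_add le_rfl hnT
      _ = 1 / x := by
        rw [← add_div]
        rw [show (1 : ℝ) + 1 = 2 by norm_num]
        rw [mul_comm, ← div_div, div_right_comm]
        norm_num

/-- For every `x > 0`, the Fresnel-type tail integral `∫_x^∞ e^{iu²} du`
(understood as the improper Riemann integral) exists and its absolute value
is bounded by `C / (1 + x)` for an absolute constant `C`. -/
theorem fresnel_tail_bound :
    ∃ C : ℝ, 0 < C ∧ ∀ x : ℝ, 0 < x →
      ∃ L : ℂ,
        Tendsto (fun R : ℝ => ∫ u in x..R, Complex.exp (Complex.I * u ^ 2))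
          atTop (nhds L) ∧
        ‖L‖ ≤ C / (1 + x) := by
  refine ⟨4, by norm_num, fun x hx => ?_⟩
  rcases le_or_gt 1 x with h1 | h1
  · obtain ⟨L, hL, hLb⟩ := fresnel_key x hx
    refine ⟨L, hL, hLb.trans ?_⟩
    rw [div_le_div_iff₀ hx (by linarith)]
    nlinarith
  · obtain ⟨L₁, hL₁, hL₁b⟩ := fresnel_key 1 one_pos
    have hint : ∀ a b : ℝ, IntervalIntegrable
        (fun u : ℝ => Complex.exp (Complex.I * u ^ 2)) volume a b := by
      intro a b
      apply Continuous.intervalIntegrable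
      fun_prop
    refine ⟨(∫ u in x..(1 : ℝ), Complex.exp (Complex.I * u ^ 2)) + L₁, ?_, ?_⟩
    · have := (tendsto_const_nhds
          (x := ∫ u in x..(1 : ℝ), Complex.exp (Complex.I * u ^ 2))
          (f := atTop (α := ℝ))).add hL₁
      apply this.congr
      intro R
      exact intervalIntegral.integral_add_adjacent_intervals (hint x 1) (hint 1 R)
    · have hseg : ‖∫ u in x..(1 : ℝ), Complex.exp (Complex.I * u ^ 2)‖ ≤ 1 := by
        have := intervalIntegral.norm_integral_le_of_norm_le_const (C := 1)
          (f := fun u : ℝ => Complex.exp (Complex.I * u ^ 2)) (a := x) (b := 1)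
          (by intro t _; rw [fresnel_norm_exp])
        refine this.trans ?_
        rw [abs_of_pos (by linarith)]
        linarith
      have : ‖(∫ u in x..(1 : ℝ), Complex.exp (Complex.I * u ^ 2)) + L₁‖ ≤ 2 := by
        calc _ ≤ _ := norm_add_le _ _
          _ ≤ 1 + 1 := add_le_add hseg (hL₁b.trans (by norm_num))
          _ = 2 := by norm_num
      refine this.trans ?_
      rw [le_div_iff₀ (by linarith)]
      nlinarith
end

section
/- Suppose q : [0,∞) → ℝ satisfies ∫_0^∞ q(x)² ln²(2+x) dx < ∞, and let q₁(x) = x^{−1} ∫_0^x |q(u)| du. Then (ln² T)/T · (∫_0^{CT} |q(u)| du)² → 0 as T → ∞ for any fixed C > 0; in particular (ln² T) ∫_{c T}^{C T} q₁(x)² dx → 0 as T → ∞. -/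
open MeasureTheory Filter Real

section Aux
variable {q : ℝ → ℝ}

lemma aux_f_memL2 (hm : Measurable q)
    (hq : IntegrableOn (fun x => q x ^ 2 * Real.log (2 + x) ^ 2) (Set.Ioi 0) volume)
    {a b : ℝ} (ha : 0 ≤ a) :
    MemLp (fun x => |q x| * Real.log (2 + x)) 2 (volume.restrict (Set.Ioc a b)) := by
  have hsub : Set.Ioc a b ⊆ Set.Ioi 0 := fun x hx => lt_of_le_of_lt ha hx.1
  have hmeas : Measurable fun x : ℝ => |q x| * Real.log (2 + x) :=
    hm.abs.mul (Real.measurable_log.comp (measurable_id.const_add 2))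
  rw [memLp_two_iff_integrable_sq hmeas.aestronglyMeasurable]
  have heq : (fun x : ℝ => (|q x| * Real.log (2 + x)) ^ 2)
      = fun x => q x ^ 2 * Real.log (2 + x) ^ 2 := by
    funext x; rw [mul_pow, sq_abs]
  rw [heq]
  exact hq.mono_set hsub

lemma aux_h_memL2 {a b : ℝ} (ha : 0 ≤ a) :
    MemLp (fun x => (Real.log (2 + x))⁻¹) 2 (volume.restrict (Set.Ioc a b)) := by
  have hmeas : Measurable fun x : ℝ => (Real.log (2 + x))⁻¹ :=
    (Real.measurable_log.comp (measurable_id.const_add 2)).inv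
  rw [memLp_two_iff_integrable_sq hmeas.aestronglyMeasurable]
  refine Integrable.mono' (g := fun _ => (Real.log 2)⁻¹ ^ 2)
    ((integrableOn_const_iff).mpr (Or.inr measure_Ioc_lt_top))
    (hmeas.pow_const 2).aestronglyMeasurable ?_
  refine (ae_restrict_iff' measurableSet_Ioc).mpr (ae_of_all _ fun x hx => ?_)
  have hx0 : 0 < x := lt_of_le_of_lt ha hx.1
  have h2 : (0:ℝ) < Real.log 2 := Real.log_pos (by norm_num)
  have hle : Real.log 2 ≤ Real.log (2 + x) := Real.log_le_log (by norm_num) (by linarith)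
  have hinv : (Real.log (2 + x))⁻¹ ≤ (Real.log 2)⁻¹ := by
    apply inv_anti₀ h2 hle
  rw [Real.norm_of_nonneg (sq_nonneg _)]
  have h0 : (0:ℝ) ≤ (Real.log (2 + x))⁻¹ := inv_nonneg.mpr (by linarith)
  exact pow_le_pow_left₀ h0 hinv 2

lemma aux_int_abs (hm : Measurable q)
    (hq : IntegrableOn (fun x => q x ^ 2 * Real.log (2 + x) ^ 2) (Set.Ioi 0) volume)
    {a b : ℝ} (ha : 0 ≤ a) :
    IntegrableOn (fun x => |q x|) (Set.Ioc a b) volume := by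
  have h1 := aux_f_memL2 hm hq (a := a) (b := b) ha
  have h2 := aux_h_memL2 (a := a) (b := b) ha
  have h3 := h1.smul h2 (r := 1)
  rw [memLp_one_iff_integrable] at h3
  refine h3.congr ((ae_restrict_iff' measurableSet_Ioc).mpr (ae_of_all _ fun x hx => ?_))
  have hx0 : 0 < x := lt_of_le_of_lt ha hx.1
  have hL : (0:ℝ) < Real.log (2 + x) := Real.log_pos (by linarith)
  show (Real.log (2 + x))⁻¹ • (|q x| * Real.log (2 + x)) = |q x|
  rw [smul_eq_mul]
  field_simp

lemma aux_key (hm : Measurable q)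
    (hq : IntegrableOn (fun x => q x ^ 2 * Real.log (2 + x) ^ 2) (Set.Ioi 0) volume)
    {a b : ℝ} (ha : 0 ≤ a) (hab : a ≤ b) :
    (∫ x in Set.Ioc a b, |q x|) ^ 2
      ≤ (b - a) * (Real.log (2 + a))⁻¹ ^ 2
          * ∫ x in Set.Ioc a b, q x ^ 2 * Real.log (2 + x) ^ 2 := by
  set μs := volume.restrict (Set.Ioc a b) with hμs
  have hf2 := aux_f_memL2 hm hq (a := a) (b := b) ha
  have hh2 := aux_h_memL2 (a := a) (b := b) ha
  have hof : ENNReal.ofReal (2:ℝ) = 2 := by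
    rw [ENNReal.ofReal_ofNat]
  have hf0 : 0 ≤ᵐ[μs] fun x => |q x| * Real.log (2 + x) := by
    refine (ae_restrict_iff' measurableSet_Ioc).mpr (ae_of_all _ fun x hx => ?_)
    have hx0 : 0 < x := lt_of_le_of_lt ha hx.1
    exact mul_nonneg (abs_nonneg _) (Real.log_nonneg (by linarith))
  have hh0 : 0 ≤ᵐ[μs] fun x => (Real.log (2 + x))⁻¹ := by
    refine (ae_restrict_iff' measurableSet_Ioc).mpr (ae_of_all _ fun x hx => ?_)
    have hx0 : 0 < x := lt_of_le_of_lt ha hx.1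
    have : (0:ℝ) ≤ Real.log (2 + x) := Real.log_nonneg (by linarith)
    positivity
  have hCS := integral_mul_le_Lp_mul_Lq_of_nonneg (μ := μs)
    (Real.holderConjugate_iff.mpr ⟨one_lt_two, by norm_num⟩)
    hf0 hh0 (hof ▸ hf2) (hof ▸ hh2)
  simp only [show (2:ℝ) = ((2:ℕ):ℝ) by norm_num, Real.rpow_natCast] at hCS
  push_cast at hCS
  simp only [← Real.sqrt_eq_rpow] at hCS
  -- identify the left side with ∫ |q|
  have hL : (∫ x, |q x| * Real.log (2 + x) * (Real.log (2 + x))⁻¹ ∂μs)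
      = ∫ x in Set.Ioc a b, |q x| := by
    refine integral_congr_ae ((ae_restrict_iff' measurableSet_Ioc).mpr
      (ae_of_all _ fun x hx => ?_))
    have hx0 : 0 < x := lt_of_le_of_lt ha hx.1
    have hLpos : (0:ℝ) < Real.log (2 + x) := Real.log_pos (by linarith)
    field_simp
  rw [hL] at hCS
  have hG : (∫ x, (|q x| * Real.log (2 + x)) ^ 2 ∂μs)
      = ∫ x in Set.Ioc a b, q x ^ 2 * Real.log (2 + x) ^ 2 := by
    refine integral_congr_ae (ae_of_all _ fun x => ?_)
    simp only [mul_pow, sq_abs]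
  rw [hG] at hCS
  set G := ∫ x in Set.Ioc a b, q x ^ 2 * Real.log (2 + x) ^ 2 with hGdef
  set H := ∫ x, ((Real.log (2 + x))⁻¹) ^ 2 ∂μs with hHdef
  have hGnn : 0 ≤ G := by
    refine setIntegral_nonneg measurableSet_Ioc fun x _ => ?_; positivity
  have hHnn : 0 ≤ H := integral_nonneg fun x => sq_nonneg _
  have hHle : H ≤ (b - a) * (Real.log (2 + a))⁻¹ ^ 2 := by
    have hbd : ∀ x ∈ Set.Ioc a b,
        ((Real.log (2 + x))⁻¹) ^ 2 ≤ (Real.log (2 + a))⁻¹ ^ 2 := by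
      intro x hx
      have hLa : (0:ℝ) < Real.log (2 + a) := Real.log_pos (by linarith)
      have hle : Real.log (2 + a) ≤ Real.log (2 + x) :=
        Real.log_le_log (by linarith) (by linarith [hx.1])
      have hinv : (Real.log (2 + x))⁻¹ ≤ (Real.log (2 + a))⁻¹ :=
        inv_anti₀ hLa hle
      have hx0 : (0:ℝ) ≤ (Real.log (2 + x))⁻¹ := inv_nonneg.mpr (by linarith)
      exact pow_le_pow_left₀ hx0 hinv 2
    calc H ≤ ∫ _ in Set.Ioc a b, (Real.log (2 + a))⁻¹ ^ 2 := by
            refine setIntegral_mono_on (hh2.integrable_sq)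
              ((integrableOn_const_iff).mpr (Or.inr measure_Ioc_lt_top)) measurableSet_Ioc hbd
      _ = (b - a) * (Real.log (2 + a))⁻¹ ^ 2 := by
            rw [setIntegral_const, smul_eq_mul, Real.volume_real_Ioc_of_le (by linarith)]
  have hIq : 0 ≤ ∫ x in Set.Ioc a b, |q x| :=
    setIntegral_nonneg measurableSet_Ioc fun x _ => abs_nonneg _
  have hsq : (∫ x in Set.Ioc a b, |q x|) ^ 2 ≤ G * H := by
    have := pow_le_pow_left₀ hIq hCS 2
    calc (∫ x in Set.Ioc a b, |q x|) ^ 2 ≤ (Real.sqrt G * Real.sqrt H) ^ 2 := this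
      _ = G * H := by rw [mul_pow, Real.sq_sqrt hGnn, Real.sq_sqrt hHnn]
  calc (∫ x in Set.Ioc a b, |q x|) ^ 2 ≤ G * H := hsq
    _ ≤ G * ((b - a) * (Real.log (2 + a))⁻¹ ^ 2) := by
        exact mul_le_mul_of_nonneg_left hHle hGnn
    _ = (b - a) * (Real.log (2 + a))⁻¹ ^ 2 * G := by ring

end Aux

set_option maxHeartbeats 1000000 in
/-- If `q(x) ln(2+x) ∈ L²(0,∞)` and `q₁(x) = x⁻¹ ∫_0^x |q|`, then
`(ln²T)/T · (∫_0^{CT} |q|)² → 0` and `ln²T · ∫_{cT}^{CT} q₁² → 0` as `T → ∞`. -/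
theorem cesaro_average_estimate (q : ℝ → ℝ) (hm : Measurable q)
    (hq : IntegrableOn (fun x => q x ^ 2 * Real.log (2 + x) ^ 2)
      (Set.Ioi 0) volume)
    (q₁ : ℝ → ℝ) (hq₁ : ∀ x : ℝ, q₁ x = x⁻¹ * ∫ u in (0:ℝ)..x, |q u|)
    (c C : ℝ) (hc : 0 < c) (hC : 0 < C) :
    Tendsto (fun T : ℝ =>
        Real.log T ^ 2 / T * (∫ u in (0:ℝ)..(C * T), |q u|) ^ 2)
      atTop (nhds 0) ∧
    Tendsto (fun T : ℝ =>
        Real.log T ^ 2 * ∫ x in Set.Ioc (c * T) (C * T), q₁ x ^ 2)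
      atTop (nhds 0) := by
  set g : ℝ → ℝ := fun x => q x ^ 2 * Real.log (2 + x) ^ 2 with hgdef
  set M : ℝ := ∫ x in Set.Ioi (0:ℝ), g x with hMdef
  have hg_nonneg : ∀ x, 0 ≤ g x := fun x => mul_nonneg (sq_nonneg _) (sq_nonneg _)
  have hP_le_M : ∀ b : ℝ, (∫ x in Set.Ioc (0:ℝ) b, g x) ≤ M := fun b =>
    setIntegral_mono_set hq (ae_of_all _ hg_nonneg)
      Set.Ioc_subset_Ioi_self.eventuallyLE
  set tail : ℝ → ℝ := fun T => M - ∫ x in Set.Ioc (0:ℝ) (Real.sqrt T), g x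
    with htaildef
  have hsqrt : Tendsto Real.sqrt atTop atTop := by
    have h := tendsto_rpow_atTop (show (0:ℝ) < 1/2 by norm_num)
    exact h.congr fun x => (Real.sqrt_eq_rpow x).symm
  have htail : Tendsto tail atTop (nhds 0) := by
    have h1 : Tendsto (fun T : ℝ => ∫ x in (0:ℝ)..(Real.sqrt T), g x)
        atTop (nhds M) := intervalIntegral_tendsto_integral_Ioi 0 hq hsqrt
    have h2 := tendsto_const_nhds.sub h1 (b := M) (f := fun _ : ℝ => M)
    rw [sub_self] at h2
    refine h2.congr fun T => ?_
    simp only [htaildef, intervalIntegral.integral_of_le (Real.sqrt_nonneg T)]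
  have hlogd : Tendsto (fun T : ℝ => Real.log T ^ 2 / Real.sqrt T)
      atTop (nhds 0) := by
    have h := (isLittleO_log_rpow_rpow_atTop (2:ℝ)
      (show (0:ℝ) < 1/2 by norm_num)).tendsto_div_nhds_zero
    refine h.congr fun x => ?_
    rw [Real.sqrt_eq_rpow, show (2:ℝ) = ((2:ℕ):ℝ) by norm_num, Real.rpow_natCast]
  have part1 : Tendsto (fun T : ℝ =>
      Real.log T ^ 2 / T * (∫ u in (0:ℝ)..(C * T), |q u|) ^ 2)
      atTop (nhds 0) := by
    have hU : Tendsto (fun T : ℝ =>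
        2 * ((Real.log 2)⁻¹ ^ 2 * M) * (Real.log T ^ 2 / Real.sqrt T)
          + 8 * C * tail T) atTop (nhds 0) := by
      have h := (hlogd.const_mul (2 * ((Real.log 2)⁻¹ ^ 2 * M))).add
        (htail.const_mul (8 * C))
      simpa using h
    refine squeeze_zero' ?_ ?_ hU
    · filter_upwards [eventually_ge_atTop (1:ℝ)] with T h1
      have hT0 : (0:ℝ) < T := lt_of_lt_of_le one_pos h1
      exact mul_nonneg (div_nonneg (sq_nonneg _) hT0.le) (sq_nonneg _)
    · filter_upwards [eventually_ge_atTop (1:ℝ),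
        hsqrt.eventually_ge_atTop C⁻¹] with T h1 h2
      have hT0 : (0:ℝ) < T := lt_of_lt_of_le one_pos h1
      set s := Real.sqrt T with hsdef
      have hs0 : 0 ≤ s := Real.sqrt_nonneg T
      have hss : s * s = T := Real.mul_self_sqrt hT0.le
      have hspos : 0 < s := Real.sqrt_pos.mpr hT0
      have hsCT : s ≤ C * T := by
        nlinarith [mul_inv_cancel₀ hC.ne', mul_le_mul_of_nonneg_left h2 hC.le]
      have hCT0 : (0:ℝ) ≤ C * T := by positivity
      set X := ∫ x in Set.Ioc (0:ℝ) s, |q x| with hX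
      set Y := ∫ x in Set.Ioc s (C*T), |q x| with hY
      have hsplit : (∫ u in (0:ℝ)..(C*T), |q u|) = X + Y := by
        rw [hX, hY, intervalIntegral.integral_of_le hCT0,
          ← Set.Ioc_union_Ioc_eq_Ioc hs0 hsCT,
          setIntegral_union (Set.Ioc_disjoint_Ioc_of_le le_rfl) measurableSet_Ioc
            (aux_int_abs hm hq le_rfl) (aux_int_abs hm hq hs0)]
      have hX2 : X ^ 2 ≤ s * ((Real.log 2)⁻¹ ^ 2 * M) := by
        have h := aux_key hm hq (a := 0) (b := s) le_rfl hs0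
        simp only [add_zero, sub_zero] at h
        calc X ^ 2 ≤ s * (Real.log 2)⁻¹ ^ 2 * ∫ x in Set.Ioc (0:ℝ) s, g x := h
          _ ≤ s * (Real.log 2)⁻¹ ^ 2 * M :=
              mul_le_mul_of_nonneg_left (hP_le_M s) (by positivity)
          _ = s * ((Real.log 2)⁻¹ ^ 2 * M) := by ring
      have hTT : tail T = M - ∫ x in Set.Ioc (0:ℝ) s, g x := by
        simp only [htaildef, hsdef]
      have htail0 : 0 ≤ tail T := by
        have := hP_le_M s; linarith [hTT]
      have htail_bd : (∫ x in Set.Ioc s (C*T), g x) ≤ tail T := by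
        have hadd : (∫ x in Set.Ioc (0:ℝ) s, g x)
            + (∫ x in Set.Ioc s (C*T), g x)
            = ∫ x in Set.Ioc (0:ℝ) (C*T), g x := by
          rw [← setIntegral_union (Set.Ioc_disjoint_Ioc_of_le le_rfl) measurableSet_Ioc
            (hq.mono_set (Set.Ioc_subset_Ioi_self))
            (hq.mono_set (fun x hx => lt_of_le_of_lt hs0 hx.1)),
            Set.Ioc_union_Ioc_eq_Ioc hs0 hsCT]
        have hle := hP_le_M (C*T)
        linarith [hTT]
      have hY2 : Y ^ 2 ≤ C * T * (Real.log (2 + s))⁻¹ ^ 2 * tail T := by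
        have h := aux_key hm hq (a := s) (b := C*T) hs0 hsCT
        have hg0 : 0 ≤ ∫ x in Set.Ioc s (C*T), g x :=
          setIntegral_nonneg measurableSet_Ioc fun x _ => hg_nonneg x
        have hK : (0:ℝ) ≤ (Real.log (2 + s))⁻¹ ^ 2 := sq_nonneg _
        calc Y ^ 2 ≤ (C*T - s) * (Real.log (2 + s))⁻¹ ^ 2
              * ∫ x in Set.Ioc s (C*T), g x := h
          _ ≤ (C*T) * (Real.log (2 + s))⁻¹ ^ 2
              * ∫ x in Set.Ioc s (C*T), g x := by
              apply mul_le_mul_of_nonneg_right _ hg0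
              apply mul_le_mul_of_nonneg_right _ hK
              linarith
          _ ≤ C * T * (Real.log (2 + s))⁻¹ ^ 2 * tail T := by
              apply mul_le_mul_of_nonneg_left htail_bd
              positivity
      have hlog4 : Real.log T ^ 2 * (Real.log (2 + s))⁻¹ ^ 2 ≤ 4 := by
        have hL : (0:ℝ) < Real.log (2 + s) := Real.log_pos (by linarith)
        have hlt0 : 0 ≤ Real.log T := Real.log_nonneg h1
        have hhalf : Real.log T = 2 * Real.log s := by
          rw [hsdef, Real.log_sqrt hT0.le]; ring
        have hs1 : Real.log s ≤ Real.log (2 + s) :=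
          Real.log_le_log hspos (by linarith)
        have hle : Real.log T ≤ 2 * Real.log (2 + s) := by rw [hhalf]; linarith
        have hLu : Real.log (2 + s) * (Real.log (2 + s))⁻¹ = 1 :=
          mul_inv_cancel₀ hL.ne'
        have ht2 : Real.log T ^ 2 ≤ 4 * Real.log (2 + s) ^ 2 := by nlinarith
        calc Real.log T ^ 2 * (Real.log (2 + s))⁻¹ ^ 2
            ≤ 4 * Real.log (2 + s) ^ 2 * (Real.log (2 + s))⁻¹ ^ 2 :=
              mul_le_mul_of_nonneg_right ht2 (sq_nonneg _)
          _ = 4 * (Real.log (2 + s) * (Real.log (2 + s))⁻¹) ^ 2 := by ring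
          _ = 4 := by rw [hLu]; norm_num
      rw [hsplit]
      have hFsq : (X + Y) ^ 2 ≤ 2 * X ^ 2 + 2 * Y ^ 2 := by
        nlinarith [sq_nonneg (X - Y)]
      have hDnn : 0 ≤ Real.log T ^ 2 / T := div_nonneg (sq_nonneg _) hT0.le
      have hstep : Real.log T ^ 2 / T * (X + Y) ^ 2
          ≤ Real.log T ^ 2 / T * (2 * (s * ((Real.log 2)⁻¹ ^ 2 * M))
            + 2 * (C * T * (Real.log (2 + s))⁻¹ ^ 2 * tail T)) := by
        apply mul_le_mul_of_nonneg_left _ hDnn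
        linarith
      refine le_trans hstep ?_
      set lt := Real.log T with hlt
      set tl := tail T with htl
      rw [← hss]
      have heq : lt ^ 2 / (s * s) * (2 * (s * ((Real.log 2)⁻¹ ^ 2 * M))
            + 2 * (C * (s * s) * (Real.log (2 + s))⁻¹ ^ 2 * tl))
          = 2 * ((Real.log 2)⁻¹ ^ 2 * M) * (lt ^ 2 / s)
            + 2 * C * (lt ^ 2 * (Real.log (2 + s))⁻¹ ^ 2) * tl := by
        field_simp
      rw [heq]
      have hlast : 2 * C * (lt ^ 2 * (Real.log (2 + s))⁻¹ ^ 2) * tl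
          ≤ 8 * C * tl := by
        have h4 := mul_le_mul_of_nonneg_right hlog4 htail0
        have h5 := mul_le_mul_of_nonneg_left h4
          (show (0:ℝ) ≤ 2 * C by positivity)
        calc 2 * C * (lt ^ 2 * (Real.log (2 + s))⁻¹ ^ 2) * tl
            = 2 * C * (lt ^ 2 * (Real.log (2 + s))⁻¹ ^ 2 * tl) := by ring
          _ ≤ 2 * C * (4 * tl) := h5
          _ = 8 * C * tl := by ring
      linarith
  refine ⟨part1, ?_⟩
  rcases lt_or_ge c C with hcC | hcC
  · have hquot : Tendsto (fun T : ℝ => ((C - c) / c ^ 2)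
        * (Real.log T ^ 2 / T * (∫ u in (0:ℝ)..(C * T), |q u|) ^ 2))
        atTop (nhds 0) := by
      simpa using part1.const_mul ((C - c) / c ^ 2)
    refine squeeze_zero' ?_ ?_ hquot
    · exact Eventually.of_forall fun T => mul_nonneg (sq_nonneg _)
        (setIntegral_nonneg measurableSet_Ioc fun x _ => sq_nonneg _)
    · filter_upwards [eventually_gt_atTop (0:ℝ)] with T hT
      have hA0 : (0:ℝ) < c * T := mul_pos hc hT
      have hB0 : (0:ℝ) ≤ C * T := by positivity
      have hintB : IntegrableOn (fun x => |q x|) (Set.Ioc (0:ℝ) (C*T)) volume :=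
        aux_int_abs hm hq le_rfl
      set F := ∫ u in (0:ℝ)..(C*T), |q u| with hF
      have hFset : F = ∫ x in Set.Ioc (0:ℝ) (C*T), |q x| := by
        rw [hF, intervalIntegral.integral_of_le hB0]
      have hPle : ∀ x ∈ Set.Ioc (c*T) (C*T), (∫ u in (0:ℝ)..x, |q u|) ≤ F := by
        intro x hx
        have hx0 : (0:ℝ) ≤ x := (hA0.trans hx.1).le
        rw [intervalIntegral.integral_of_le hx0, hFset]
        exact setIntegral_mono_set hintB (ae_of_all _ fun y => abs_nonneg _)
          (Set.Ioc_subset_Ioc_right hx.2).eventuallyLE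
      have hPnn : ∀ x ∈ Set.Ioc (c*T) (C*T),
          0 ≤ ∫ u in (0:ℝ)..x, |q u| := by
        intro x hx
        rw [intervalIntegral.integral_of_le (hA0.trans hx.1).le]
        exact setIntegral_nonneg measurableSet_Ioc fun y _ => abs_nonneg _
      have hbd : ∀ x ∈ Set.Ioc (c*T) (C*T),
          q₁ x ^ 2 ≤ ((c*T)⁻¹) ^ 2 * F ^ 2 := by
        intro x hx
        rw [hq₁ x, mul_pow]
        have hxinv : x⁻¹ ≤ (c*T)⁻¹ := inv_anti₀ hA0 hx.1.le
        have hxinv0 : (0:ℝ) ≤ x⁻¹ := inv_nonneg.mpr (hA0.trans hx.1).le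
        have hFnn : 0 ≤ F := by
          rw [hFset]
          exact setIntegral_nonneg measurableSet_Ioc fun y _ => abs_nonneg _
        exact mul_le_mul (pow_le_pow_left₀ hxinv0 hxinv 2)
          (pow_le_pow_left₀ (hPnn x hx) (hPle x hx) 2) (sq_nonneg _) (sq_nonneg _)
      have hcont : ContinuousOn (fun x => ∫ t in Set.Ioc (0:ℝ) x, |q t|)
          (Set.Icc 0 (C*T)) :=
        intervalIntegral.continuousOn_primitive
          ((integrableOn_Icc_iff_integrableOn_Ioc).mpr hintB)
      have hsub : Set.Ioc (c*T) (C*T) ⊆ Set.Icc 0 (C*T) :=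
        fun x hx => ⟨(hA0.trans hx.1).le, hx.2⟩
      have hcont2 : ContinuousOn (fun x => x⁻¹ * ∫ t in Set.Ioc (0:ℝ) x, |q t|)
          (Set.Ioc (c*T) (C*T)) := by
        apply ContinuousOn.mul
        · exact continuousOn_id.inv₀ fun x hx => (hA0.trans hx.1).ne'
        · exact hcont.mono hsub
      have hq₁ae : AEStronglyMeasurable q₁
          (volume.restrict (Set.Ioc (c*T) (C*T))) := by
        refine (hcont2.aestronglyMeasurable measurableSet_Ioc).congr ?_
        refine (ae_restrict_iff' measurableSet_Ioc).mpr (ae_of_all _ fun x hx => ?_)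
        simp only [hq₁, intervalIntegral.integral_of_le (hA0.trans hx.1).le]
      have hASMsq : AEStronglyMeasurable (fun x => q₁ x ^ 2)
          (volume.restrict (Set.Ioc (c*T) (C*T))) :=
        (hq₁ae.mul hq₁ae).congr (ae_of_all _ fun x => (pow_two (q₁ x)).symm)
      have hint_sq : IntegrableOn (fun x => q₁ x ^ 2)
          (Set.Ioc (c*T) (C*T)) volume := by
        refine Integrable.mono' (g := fun _ => ((c*T)⁻¹) ^ 2 * F ^ 2)
          ((integrableOn_const_iff).mpr (Or.inr measure_Ioc_lt_top)) hASMsq ?_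
        refine (ae_restrict_iff' measurableSet_Ioc).mpr (ae_of_all _ fun x hx => ?_)
        rw [Real.norm_of_nonneg (sq_nonneg _)]
        exact hbd x hx
      have hAB : c * T ≤ C * T := by nlinarith
      have hIle : (∫ x in Set.Ioc (c*T) (C*T), q₁ x ^ 2)
          ≤ (C*T - c*T) * (((c*T)⁻¹) ^ 2 * F ^ 2) := by
        calc (∫ x in Set.Ioc (c*T) (C*T), q₁ x ^ 2)
            ≤ ∫ _ in Set.Ioc (c*T) (C*T), ((c*T)⁻¹) ^ 2 * F ^ 2 :=
              setIntegral_mono_on hint_sq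
                ((integrableOn_const_iff).mpr (Or.inr measure_Ioc_lt_top))
                measurableSet_Ioc hbd
          _ = (C*T - c*T) * (((c*T)⁻¹) ^ 2 * F ^ 2) := by
              rw [setIntegral_const, smul_eq_mul, Real.volume_real_Ioc_of_le (by linarith)]
      have h := mul_le_mul_of_nonneg_left hIle (sq_nonneg (Real.log T))
      refine le_trans h (le_of_eq ?_)
      field_simp
  · have hev : ∀ᶠ T in atTop, (0:ℝ)
        = Real.log T ^ 2 * ∫ x in Set.Ioc (c*T) (C*T), q₁ x ^ 2 := by
      filter_upwards [eventually_gt_atTop (0:ℝ)] with T hT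
      have hemp : Set.Ioc (c*T) (C*T) = ∅ :=
        Set.Ioc_eq_empty (not_lt.mpr (by nlinarith))
      rw [hemp]
      simp
    exact tendsto_const_nhds.congr' hev
end
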